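/- Secret query answering is non-monotonic: there exist an instance D, a secrecy view V, a query Q, and a superset instance D1 ⊇ D such that SA(Q, D, {V}) ⊄ SA(Q, D1, {V}). Concretely, with D = {P(a)}, V(x) ← P(x), R(x), and Q(x) = P(x): SA(Q,D,{V}) = {a} but SA(Q,D1,{V}) = ∅ for D1 = {P(a), R(a)}. -/
import Mathlib


/-- Information order on values. -/
def iord {U : Type*} (null : U) (c d : U) : Prop := c = d ∨ (c = null ∧ d ≠ null)

/-- Instances for the schema {P(A), R(A)} with tuple identifiers: a pair of
functions giving the (single-attribute) tuples of `P` and of `R`. -/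
def Corr13 {U I J : Type*} (null : U) (D D' : (I → U) × (J → U)) : Prop :=
  (∀ i, iord null (D'.1 i) (D.1 i)) ∧ (∀ j, iord null (D'.2 j) (D.2 j))

/-- Admissibility for the secrecy view `V(x) ← P(x), R(x)`: since `x` is
relevant it cannot be null, so admissibility means there is no non-null value
occurring both in `P` and in `R`. -/
def Adm13 {U I J : Type*} (null : U) (D' : (I → U) × (J → U)) : Prop :=
  ¬ ∃ c, c ≠ null ∧ (∃ i, D'.1 i = c) ∧ (∃ j, D'.2 j = c)

/-- Secrecy instances: admissible `D`-correlated instances that are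
`≤_D`-minimal (no admissible correlated instance is strictly more informative). -/
def Sec13 {U I J : Type*} (null : U) (D : (I → U) × (J → U)) :
    Set ((I → U) × (J → U)) :=
  {D' | Corr13 null D D' ∧ Adm13 null D' ∧
    ∀ D'', Corr13 null D D'' → Adm13 null D'' →
      ((∀ i, iord null (D'.1 i) (D''.1 i)) ∧ (∀ j, iord null (D'.2 j) (D''.2 j))) →
        D'' = D'}

/-- Secret answers to the query `Q(x) = P(x)` (whose free variable is not
relevant): intersection over all secrecy instances of the `P`-extension. -/
def SA13 {U I J : Type*} (null : U) (D : (I → U) × (J → U)) : Set U :=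
  {c | ∀ D' ∈ Sec13 null D, c ∈ Set.range D'.1}

/-- Non-monotonicity of secret query answering: for `D = {P(a)}` and
`D1 = {P(a), R(a)}` with secrecy view `V(x) ← P(x), R(x)` and query
`Q(x) = P(x)`, we have `SA(Q,D) = {a}`, `SA(Q,D1) = ∅`, so
`SA(Q,D) ⊄ SA(Q,D1)`. -/
theorem stmt13 {U : Type*} (null a : U) (ha : a ≠ null) :
    SA13 null ((fun _ : Unit => a, fun x : Empty => x.elim)) = {a} ∧
    SA13 null ((fun _ : Unit => a, fun _ : Unit => a)) = (∅ : Set U) ∧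
    ¬ (SA13 null ((fun _ : Unit => a, fun x : Empty => x.elim)) ⊆
        SA13 null ((fun _ : Unit => a, fun _ : Unit => a))) := by
  set D : (Unit → U) × (Empty → U) := (fun _ : Unit => a, fun x : Empty => x.elim) with hDdef
  set D1 : (Unit → U) × (Unit → U) := (fun _ : Unit => a, fun _ : Unit => a) with hD1def
  -- D is itself the unique secrecy instance of D
  have hDmem : D ∈ Sec13 null D := by
    refine ⟨⟨fun i => Or.inl rfl, fun j => j.elim⟩, ?_, ?_⟩
    · rintro ⟨c, hc, _, ⟨j, _⟩⟩; exact j.elim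
    · rintro D'' ⟨h1, h2⟩ _ ⟨g1, g2⟩
      have e1 : D''.1 = D.1 := by
        funext i
        rcases g1 i with h | ⟨h, _⟩
        · exact h.symm
        · exact absurd h ha
      have e2 : D''.2 = D.2 := by funext j; exact j.elim
      exact Prod.ext e1 e2
  have h1 : SA13 null D = {a} := by
    ext c
    simp only [SA13, Set.mem_setOf_eq, Set.mem_singleton_iff]
    constructor
    · intro h
      obtain ⟨i, hi⟩ := h D hDmem
      exact hi.symm
    · rintro rfl D' hD'
      obtain ⟨⟨c1, c2⟩, hadm, hmin⟩ := hD'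
      have : D = D' := by
        apply hmin
        · exact ⟨fun i => Or.inl rfl, fun j => j.elim⟩
        · rintro ⟨c, hc, _, ⟨j, _⟩⟩; exact j.elim
        · exact ⟨c1, fun j => j.elim⟩
      exact ⟨(), by rw [← this]⟩
  -- the two secrecy instances of D1
  have hS1 : ((fun _ : Unit => a, fun _ : Unit => null) : (Unit → U) × (Unit → U)) ∈
      Sec13 null D1 := by
    refine ⟨⟨fun i => Or.inl rfl, fun j => Or.inr ⟨rfl, ha⟩⟩, ?_, ?_⟩
    · rintro ⟨c, hc, _, ⟨j, hj⟩⟩; exact hc hj.symm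
    · rintro D'' ⟨c1, c2⟩ hadm ⟨g1, g2⟩
      have e1 : D''.1 = fun _ : Unit => a := by
        funext i
        rcases g1 i with h | ⟨h, _⟩
        · exact h.symm
        · exact absurd h ha
      have e2 : D''.2 = fun _ : Unit => null := by
        funext j
        rcases g2 j with h | ⟨_, hne⟩
        · exact h.symm
        · exfalso
          rcases c2 j with h | ⟨h, _⟩
          · exact hadm ⟨a, ha, ⟨(), by rw [e1]⟩, ⟨j, h⟩⟩
          · exact hne h
      exact Prod.ext e1 e2
  have hS2 : ((fun _ : Unit => null, fun _ : Unit => a) : (Unit → U) × (Unit → U)) ∈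
      Sec13 null D1 := by
    refine ⟨⟨fun i => Or.inr ⟨rfl, ha⟩, fun j => Or.inl rfl⟩, ?_, ?_⟩
    · rintro ⟨c, hc, ⟨i, hi⟩, _⟩; exact hc hi.symm
    · rintro D'' ⟨c1, c2⟩ hadm ⟨g1, g2⟩
      have e2 : D''.2 = fun _ : Unit => a := by
        funext j
        rcases g2 j with h | ⟨h, _⟩
        · exact h.symm
        · exact absurd h ha
      have e1 : D''.1 = fun _ : Unit => null := by
        funext i
        rcases g1 i with h | ⟨_, hne⟩
        · exact h.symm
        · exfalso
          rcases c1 i with h | ⟨h, _⟩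
          · exact hadm ⟨a, ha, ⟨i, h⟩, ⟨(), by rw [e2]⟩⟩
          · exact hne h
      exact Prod.ext e1 e2
  have h2 : SA13 null D1 = (∅ : Set U) := by
    ext c
    simp only [SA13, Set.mem_setOf_eq, Set.mem_empty_iff_false, iff_false]
    intro h
    obtain ⟨i1, e1⟩ := h _ hS1
    obtain ⟨i2, e2⟩ := h _ hS2
    exact ha (e1.trans e2.symm)
  refine ⟨h1, h2, ?_⟩
  intro hsub
  have : a ∈ SA13 null D1 := hsub (by rw [h1]; rfl)
  rw [h2] at this
  exact this
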